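/- For every integer n ≥ 1 and every integer k with 0 ≤ k ≤ n−1, one has ∑_{m=1}^{n} α_m^{(2n-1)}(n) · m^{2k+1} = δ_{n-1,k}, where α_m^{(2n-1)}(n) = (−1)^{n+1} m / ((n!)² · π_m(n)) and δ_{n-1,k} is the Kronecker delta. -/
import Mathlib


open Finset

/-- `π_m(n) = ∏_{k=1, k ≠ m}^{n} (1 - m²/k²)`. -/
noncomputable def pim (n m : ℕ) : ℝ :=
  ∏ k ∈ (Finset.Icc 1 n).erase m, (1 - (m : ℝ) ^ 2 / (k : ℝ) ^ 2)

/-- `α_m^{(2n-1)}(n) = (-1)^(n+1) m / ((n!)² π_m(n))`. -/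
noncomputable def alphaTop (n m : ℕ) : ℝ :=
  (-1 : ℝ) ^ (n + 1) * (m : ℝ) / (((n.factorial : ℝ)) ^ 2 * pim n m)

open Polynomial in
lemma leadingCoeff_lagrange_basis {ι : Type*} [DecidableEq ι] (s : Finset ι) (v : ι → ℝ)
    (i : ι) : (Lagrange.basis s v i).leadingCoeff = Lagrange.nodalWeight s v i := by
  rw [Lagrange.basis, Lagrange.nodalWeight, Polynomial.leadingCoeff_prod]
  refine Finset.prod_congr rfl fun j _ => ?_
  rw [Lagrange.basisDivisor, Polynomial.leadingCoeff_mul, Polynomial.leadingCoeff_C,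
    (Polynomial.monic_X_sub_C (v j)).leadingCoeff, mul_one]

open Polynomial in
lemma nodalWeight_pow_sum {ι : Type*} [DecidableEq ι] (s : Finset ι) (v : ι → ℝ)
    (hvs : Set.InjOn v s) (k : ℕ) (hk : k < s.card) :
    ∑ i ∈ s, Lagrange.nodalWeight s v i * (v i) ^ k =
      if k = s.card - 1 then 1 else 0 := by
  have hdeg : ((X : ℝ[X]) ^ k).degree < s.card := by
    rw [Polynomial.degree_X_pow]; exact_mod_cast hk
  have h := Lagrange.eq_interpolate (f := (X : ℝ[X]) ^ k) hvs hdeg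
  have h2 := congrArg (fun p : ℝ[X] => p.coeff (s.card - 1)) h
  simp only [Lagrange.interpolate_apply, Polynomial.eval_pow, Polynomial.eval_X,
    Polynomial.finset_sum_coeff, Polynomial.coeff_C_mul, Polynomial.coeff_X_pow] at h2
  have hbc : ∀ i ∈ s, (Lagrange.basis s v i).coeff (s.card - 1) =
      Lagrange.nodalWeight s v i := by
    intro i hi
    rw [← Lagrange.natDegree_basis hvs hi, Polynomial.coeff_natDegree,
      leadingCoeff_lagrange_basis]
  rw [Finset.sum_congr rfl fun i hi => by rw [hbc i hi]] at h2
  rw [← Finset.sum_congr rfl fun i (hi : i ∈ s) => (mul_comm (v i ^ k)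
    (Lagrange.nodalWeight s v i)), ← h2]
  simp [eq_comm]

lemma alphaTop_eq_nodalWeight (n m : ℕ) (hn : 1 ≤ n) (hm : m ∈ Finset.Icc 1 n) (k : ℕ) :
    alphaTop n m * (m : ℝ) ^ (2 * k + 1) =
      Lagrange.nodalWeight (Finset.Icc 1 n) (fun j => (j : ℝ) ^ 2) m * ((m : ℝ) ^ 2) ^ k := by
  simp only [Finset.mem_Icc] at hm
  have hm0 : (m : ℝ) ≠ 0 := by
    have : 0 < m := hm.1
    positivity
  set s : Finset ℕ := (Finset.Icc 1 n).erase m with hs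
  have hcard : s.card = n - 1 := by
    rw [hs, Finset.card_erase_of_mem (Finset.mem_Icc.mpr hm), Nat.card_Icc]
    omega
  set P : ℝ := ∏ j ∈ s, ((m : ℝ) ^ 2 - (j : ℝ) ^ 2) with hP
  have hj0 : ∀ j ∈ s, (j : ℝ) ≠ 0 := by
    intro j hj
    have := (Finset.mem_Icc.mp (Finset.mem_of_mem_erase hj)).1
    positivity
  have hjm : ∀ j ∈ s, (m : ℝ) ^ 2 - (j : ℝ) ^ 2 ≠ 0 := by
    intro j hj
    have hne : j ≠ m := (Finset.mem_erase.mp hj).1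
    have : (j : ℝ) ^ 2 ≠ (m : ℝ) ^ 2 := by
      intro h
      exact hne (Nat.pow_left_injective (n := 2) two_ne_zero (by exact_mod_cast h))
    intro h
    exact this (by linarith [sub_eq_zero.mp h])
  have hPne : P ≠ 0 := Finset.prod_ne_zero_iff.mpr hjm
  -- factorial as a product
  have hfact : ((n.factorial : ℝ)) = ∏ j ∈ Finset.Icc 1 n, (j : ℝ) := by
    have h1 : (∏ j ∈ Finset.Ico 1 (n + 1), j) = n.factorial := Finset.prod_Ico_id_eq_factorial n
    rw [← Finset.Ico_add_one_right_eq_Icc, ← h1]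
    push_cast
    rfl
  -- key identity for the denominator
  have hkey : ((n.factorial : ℝ)) ^ 2 * pim n m = (m : ℝ) ^ 2 * ((-1 : ℝ) ^ (n - 1) * P) := by
    have h2 : ((n.factorial : ℝ)) ^ 2 = (m : ℝ) ^ 2 * ∏ j ∈ s, (j : ℝ) ^ 2 := by
      rw [hfact, ← Finset.prod_pow, ← Finset.mul_prod_erase _ _ (Finset.mem_Icc.mpr hm)]
    have h3 : (∏ j ∈ s, (j : ℝ) ^ 2) * pim n m = ∏ j ∈ s, ((j : ℝ) ^ 2 - (m : ℝ) ^ 2) := by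
      rw [pim, ← Finset.prod_mul_distrib]
      refine Finset.prod_congr rfl fun j hj => ?_
      field_simp [hj0 j hj]
    have h4 : (∏ j ∈ s, ((j : ℝ) ^ 2 - (m : ℝ) ^ 2)) = (-1 : ℝ) ^ (n - 1) * P := by
      rw [hP, ← hcard]
      rw [← Finset.prod_const (-1 : ℝ), ← Finset.prod_mul_distrib]
      exact Finset.prod_congr rfl fun j hj => by ring
    rw [h2, mul_assoc, h3, h4]
  have hnw : Lagrange.nodalWeight (Finset.Icc 1 n) (fun j => (j : ℝ) ^ 2) m = P⁻¹ := by
    rw [Lagrange.nodalWeight, ← Finset.prod_inv_distrib]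
  have hsign : (-1 : ℝ) ^ (n + 1) = (-1 : ℝ) ^ (n - 1) := by
    have h2 : n + 1 = (n - 1) + 2 := by omega
    rw [h2, pow_add]
    norm_num
  rw [alphaTop, hkey, hnw, hsign]
  have hs1 : (-1 : ℝ) ^ (n - 1) ≠ 0 := pow_ne_zero _ (by norm_num)
  field_simp
  ring

theorem alphaTop_orthogonality (n : ℕ) (hn : 1 ≤ n) (k : ℕ) (hk : k ≤ n - 1) :
    ∑ m ∈ Finset.Icc 1 n, alphaTop n m * (m : ℝ) ^ (2 * k + 1) =
      if k = n - 1 then 1 else 0 := by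
  have hcard : (Finset.Icc 1 n).card = n := by rw [Nat.card_Icc]; omega
  have hinj : Set.InjOn (fun j : ℕ => (j : ℝ) ^ 2) (Finset.Icc 1 n) := by
    intro a ha b hb hab
    have hab' : (a:ℝ) ^ 2 = (b:ℝ) ^ 2 := hab
    have hab2 : a ^ 2 = b ^ 2 := by exact_mod_cast hab'
    exact Nat.pow_left_injective two_ne_zero hab2
  have hksum := nodalWeight_pow_sum (Finset.Icc 1 n) (fun j : ℕ => (j : ℝ) ^ 2) hinj k
    (by omega)
  rw [hcard] at hksum
  rw [Finset.sum_congr rfl fun m hm => alphaTop_eq_nodalWeight n m hn hm k]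
  exact hksum
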